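/- Let M be an integral commutative binoid, let a ∈ M be invertible, and let q : M → M' := M/(a ∼ 1) be the canonical quotient map. Then for every pivotal element x' of M' there exists a pivotal element x of M with q(x) = x', and for every y' ∈ P(M') there exists y ∈ P(M) with q(y) = y'. -/

import Mathlib

/-- An element `x` of a binoid is pivotal if `x ≠ 0` and `M^x := {y | x*y = x} ≠ {1}`. -/
def IsPivotal {M : Type*} [CommMonoidWithZero M] (x : M) : Prop :=
  x ≠ 0 ∧ ∃ y : M, y ≠ 1 ∧ x * y = x

/-- `P(M) = ⋃_{x pivotal} M^x`. -/
def pivUnion (M : Type*) [CommMonoidWithZero M] : Set M :=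
  {y | ∃ x : M, IsPivotal x ∧ x * y = x}
/-- The smallest monoid congruence identifying `a` with `1`; its quotient is `M/(a ∼ 1)`. -/
def aCon {M : Type*} [CommMonoidWithZero M] (a : M) : Con M :=
  conGen fun x y => x = a ∧ y = 1
/-- The quotient of a commutative binoid by a congruence is again a binoid,
with zero the class of `0`. -/
instance conQuotCMWZ {M : Type*} [CommMonoidWithZero M] (c : Con M) :
    CommMonoidWithZero c.Quotient where
  __ := (inferInstance : CommMonoid c.Quotient)
  zero := c.mk' 0
  zero_mul a := Con.induction_on a fun x => by
    show c.mk' 0 * c.mk' x = c.mk' 0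
    rw [← map_mul, zero_mul]
  mul_zero a := Con.induction_on a fun x => by
    show c.mk' x * c.mk' 0 = c.mk' 0
    rw [← map_mul, mul_zero]


private def powRel {M : Type*} [CommMonoidWithZero M] (a : M) : Con M where
  r x y := ∃ m n : ℕ, x * a ^ m = y * a ^ n
  iseqv := by
    refine ⟨fun _ => ⟨0, 0, rfl⟩, ?_, ?_⟩
    · rintro x y ⟨m, n, h⟩
      exact ⟨n, m, h.symm⟩
    · rintro x y z ⟨m, n, h1⟩ ⟨p, q, h2⟩
      refine ⟨m + p, q + n, ?_⟩
      rw [pow_add, pow_add, ← mul_assoc, h1, mul_assoc, mul_comm (a ^ n), ← mul_assoc, h2,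
        mul_assoc]
  mul' := by
    rintro w x y z ⟨m, n, h1⟩ ⟨p, q, h2⟩
    refine ⟨m + p, n + q, ?_⟩
    rw [pow_add, pow_add, mul_mul_mul_comm w y, h1, h2, mul_mul_mul_comm]

private lemma aCon_pow {M : Type*} [CommMonoidWithZero M] (a : M) {x y : M}
    (h : aCon a x y) : ∃ m n : ℕ, x * a ^ m = y * a ^ n :=
  (Con.conGen_le (c := powRel a)).2 (fun u v huv => by
    obtain ⟨hu, hv⟩ := huv; subst hu; subst hv; exact ⟨0, 1, by simp⟩) h

private lemma aCon_mk_a_eq_one {M : Type*} [CommMonoidWithZero M] (a : M) :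
    (aCon a).mk' a = 1 := (Con.eq _).2 (ConGen.Rel.of a 1 ⟨rfl, rfl⟩)

/-- Let `M` be an integral commutative binoid, `a ∈ M` invertible, and
`q : M → M' := M/(a ∼ 1)` the canonical quotient map. Then every pivotal element of `M'`
lifts to a pivotal element of `M`, and every element of `P(M')` lifts to an element
of `P(M)`. -/
theorem pivotal_lift_of_quotient {M : Type*} [CommMonoidWithZero M]
    (hint : ∀ x y : M, x * y = 0 → x = 0 ∨ y = 0) (a : M) (ha : IsUnit a) :
    (∀ x' : (aCon a).Quotient, IsPivotal x' →
      ∃ x : M, IsPivotal x ∧ (aCon a).mk' x = x') ∧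
    (∀ y' : (aCon a).Quotient, y' ∈ pivUnion ((aCon a).Quotient) →
      ∃ y : M, y ∈ pivUnion M ∧ (aCon a).mk' y = y') := by
  set a' : M := ↑ha.unit⁻¹ with ha'
  have haa' : a * a' = 1 := by have := ha.unit.mul_inv; rwa [ha.unit_spec] at this
  have hmka' : (aCon a).mk' a' = 1 := by
    have := map_mul ((aCon a).mk') a a'
    rw [haa', map_one, aCon_mk_a_eq_one, one_mul] at this
    exact this.symm
  have key : ∀ (x : M) (y' : (aCon a).Quotient), (aCon a).mk' x * y' = (aCon a).mk' x →
      ∃ y : M, x * y = x ∧ (aCon a).mk' y = y' := by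
    intro x y' hxy
    obtain ⟨y, rfl⟩ := Con.mk'_surjective y'
    rw [← map_mul] at hxy
    obtain ⟨m, n, h⟩ := aCon_pow a ((Con.eq _).1 hxy)
    refine ⟨y * a ^ m * a' ^ n, ?_, ?_⟩
    · have : x * (y * a ^ m * a' ^ n) = (x * y * a ^ m) * a' ^ n := by rw [← mul_assoc, ← mul_assoc]
      rw [this, h, mul_assoc, ← mul_pow, haa', one_pow, mul_one]
    · rw [map_mul, map_mul, map_pow, map_pow, aCon_mk_a_eq_one, hmka', one_pow, one_pow,
        mul_one, mul_one]
  have piv : ∀ x' : (aCon a).Quotient, IsPivotal x' →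
      ∃ x : M, IsPivotal x ∧ (aCon a).mk' x = x' := by
    intro x' ⟨hx0, y', hy1, hxy⟩
    obtain ⟨x, rfl⟩ := Con.mk'_surjective x'
    obtain ⟨y, hxyx, hmy⟩ := key x y' hxy
    refine ⟨x, ⟨?_, y, ?_, hxyx⟩, rfl⟩
    · rintro rfl; exact hx0 rfl
    · rintro rfl; exact hy1 (by rw [← hmy, map_one])
  refine ⟨piv, fun y' ⟨x', hx', hxy⟩ => ?_⟩
  obtain ⟨x, hx, rfl⟩ := piv x' hx'
  obtain ⟨y, hxyx, hmy⟩ := key x y' hxy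
  exact ⟨y, ⟨x, hx, hxyx⟩, hmy⟩
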